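/- Let V be a nonempty string over Σ_$ containing at least one occurrence of $, and let s be the position of the first occurrence of $ in V. Then for every i ∈ [1..s], rtsenc(V)[i..s] = rtsenc(V[i..s]), i.e., on the segment up to the first $, the rotational Cartesian tree signature encoding of V agrees with that of the corresponding substring. -/

import Mathlib

open Classical

/-- Unlabeled binary trees, representing the shapes of Cartesian trees
(Cartesian tree matching compares tree structure). -/
inductive CTree : Type where
  | leaf : CTree
  | node : CTree → CTree → CTree
  deriving DecidableEq

noncomputable section

/-- The alphabet `Σ_$`: the integer alphabet `Σ = {0,…,σ}` together with the
special symbol `$ = ⊥`, which is smaller than every symbol of `Σ`. -/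
abbrev Sig (σ : ℕ) := WithBot (Fin (σ + 1))

/-- The encoding alphabet `Σ_$ ∪ ℕ ∪ {∞}`: `$ = ⊥`, naturals, and `∞ = ⊤`. -/
abbrev Enc := WithBot (WithTop ℕ)

/-- The symbol `∞`, larger than every integer. -/
def infE : Enc := ((⊤ : WithTop ℕ) : Enc)

variable {σ : ℕ}

/-- 1-based access, defaulting to `$`. -/
def get1 (V : List (Sig σ)) (i : ℕ) : Sig σ := V.getD (i - 1) ⊥

/-- Parent distance encoding: entry at 1-based position `i`:
`∞` if `$ ≠ V[i] < V[j]` for all `j < i`; `$` if `V[i] = $`;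
otherwise `i − max{ j ∈ [1..i−1] : V[j] < V[i] }`. -/
def pdEntry (V : List (Sig σ)) (i : ℕ) : Enc :=
  if get1 V i = ⊥ then ⊥
  else if ∀ j, 1 ≤ j → j < i → get1 V i < get1 V j then infE
  else (((i - Nat.findGreatest (fun j => 1 ≤ j ∧ get1 V j < get1 V i) (i - 1) : ℕ) : WithTop ℕ) : Enc)

/-- The parent distance encoding `pd(V)`. -/
def pd (V : List (Sig σ)) : List Enc := (List.range V.length).map fun k => pdEntry V (k + 1)

/-- 0-based position of the leftmost minimum symbol. -/
def minPos (V : List (Sig σ)) : ℕ := V.findIdx fun c => V.all fun d => decide (c ≤ d)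

def ctAux : ℕ → List (Sig σ) → CTree
  | 0, _ => .leaf
  | fuel + 1, V =>
    if V.isEmpty then .leaf
    else .node (ctAux fuel (V.take (minPos V))) (ctAux fuel (V.drop (minPos V + 1)))

/-- The Cartesian tree `CT(V)`: root at the position of the smallest symbol
(ties broken towards the smallest position), recursing on both sides. -/
def ct (V : List (Sig σ)) : CTree := ctAux V.length V

/-- Cartesian tree matching: `U ≈ V` iff `CT(U) = CT(V)`. -/
def CtMatch (U V : List (Sig σ)) : Prop := ct U = ct V

/-- `k`-fold concatenation `Y^k`. -/
def listPow {α : Type*} : List α → ℕ → List α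
  | _, 0 => []
  | Y, k + 1 => Y ++ listPow Y k

/-- A string is primitive if `X = Y^k` implies `Y = X` and `k = 1`. -/
def Primitive {α : Type*} (X : List α) : Prop := ∀ Y k, X = listPow Y k → Y = X ∧ k = 1

/-- The primitive root `root(U)` of a string. -/
def proot {α : Type*} (U : List α) : List α :=
  if h : ∃ Y, Primitive Y ∧ ∃ k, 1 ≤ k ∧ U = listPow Y k then h.choose else U

/-- `V^ω[..i]`, the length-`i` prefix of the infinite self-concatenation of `V`. -/
def wpre {α : Type*} (V : List α) (i : ℕ) : List α := (listPow V i).take i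

/-- One left rotation. -/
def rotOne {α : Type*} (V : List α) : List α := V.drop 1 ++ V.take 1

/-- `rot(V,k)`, the `k`-th left rotation of `V`. -/
def rot {α : Type*} (V : List α) (k : ℕ) : List α := rotOne^[k] V

/-- Rotational parent distance encoding: `rpd(V) = pd(V·V)[|V|+1..]`. -/
def rpd (V : List (Sig σ)) : List Enc := (pd (V ++ V)).drop V.length

/-- The ω-preorder: `V ⪯ω U` iff there is `i` with `pd(V^ω[..i]) < pd(U^ω[..i])`
(lexicographically, with a proper prefix smaller), or `root(rpd V) = root(rpd U)`. -/
def omegaLe (V U : List (Sig σ)) : Prop :=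
  (∃ i : ℕ, List.Lex (· < ·) (pd (wpre V i)) (pd (wpre U i))) ∨ proot (rpd V) = proot (rpd U)

/-- `V =ω U`. -/
def omegaEq (V U : List (Sig σ)) : Prop := omegaLe V U ∧ omegaLe U V

/-- `V ≺ω U`. -/
def omegaLt (V U : List (Sig σ)) : Prop := omegaLe V U ∧ ¬ omegaEq V U

/-- Entry of the rotational Cartesian tree signature encoding at 1-based position `i`. -/
def rtsEntry (V : List (Sig σ)) (i : ℕ) : WithBot ℕ :=
  if get1 V i = ⊥ then ⊥
  else (((pd (rot V i)).count infE - ((pd (get1 V i :: rot V i)).drop 1).count infE : ℕ) : WithBot ℕ)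

/-- The rotational Cartesian tree signature encoding `rtsenc(V)`. -/
def rtsenc (V : List (Sig σ)) : List (WithBot ℕ) :=
  (List.range V.length).map fun k => rtsEntry V (k + 1)

/-- `π(V) = rtsenc(V)[1]`. -/
def piF (V : List (Sig σ)) : WithBot ℕ := (rtsenc V).getD 0 ⊥

/-- Length of the longest common prefix of two strings. -/
def lcpLen {α : Type*} [DecidableEq α] : List α → List α → ℕ
  | a :: as, b :: bs => if a = b then lcpLen as bs + 1 else 0
  | _, _ => 0

/-- `lcp∞(U,W)`: the number of occurrences of `∞` among the first `ℓ` symbols of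
`pd(U)`, where `ℓ` is the length of the longest common prefix of `pd U` and `pd W`. -/
def lcpInf (U W : List (Sig σ)) : ℕ := ((pd U).take (lcpLen (pd U) (pd W))).count infE

/-- Total length `n = |T_1 ⋯ T_d|` of all texts. -/
def totLen (Ts : List (List (Sig σ))) : ℕ := (Ts.map List.length).sum

/-- `conj_𝒯(i)` for `i ∈ [1..n]`: with `j = min{h : n_1+⋯+n_h ≥ i}`,
the rotation `rot(T_j, i − 1 − (n_1+⋯+n_{j−1}))`. -/
def conjAt : List (List (Sig σ)) → ℕ → List (Sig σ)
  | [], _ => []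
  | T :: Ts, i => if i ≤ T.length then rot T (i - 1) else conjAt Ts (i - T.length)

/-- The text `T_j` containing global position `i`. -/
def textAt : List (List (Sig σ)) → ℕ → List (Sig σ)
  | [], _ => []
  | T :: Ts, i => if i ≤ T.length then T else textAt Ts (i - T.length)

/-- `prev_𝒯(i)`. -/
def prevT (Ts : List (List (Sig σ))) (i : ℕ) : ℕ :=
  if omegaEq (conjAt Ts i) (textAt Ts i) then i - 1 + (proot (rpd (textAt Ts i))).length
  else i - 1

/-- `CA` is the conjugate array of the texts `Ts`: a permutation of `[1..n]` with
`CA[i] = j` iff `i − 1` equals the number of `k ∈ [1..n]` with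
`conj(k) ≺ω conj(j)`, or `conj(k) =ω conj(j)` and `k < j`. -/
def IsCA (Ts : List (List (Sig σ))) (CA : ℕ → ℕ) : Prop :=
  Set.BijOn CA (Set.Icc 1 (totLen Ts)) (Set.Icc 1 (totLen Ts)) ∧
  ∀ i ∈ Set.Icc 1 (totLen Ts), ∀ j ∈ Set.Icc 1 (totLen Ts),
    (CA i = j ↔ i - 1 = Set.ncard {k | k ∈ Set.Icc 1 (totLen Ts) ∧
      (omegaLt (conjAt Ts k) (conjAt Ts j) ∨ (omegaEq (conjAt Ts k) (conjAt Ts j) ∧ k < j))})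

/-- The conjugate range of `P`: positions `i ∈ [1..n]` with
`P ≈ conj(CA[i])^ω[..|P|]`. -/
def crange (Ts : List (List (Sig σ))) (CA : ℕ → ℕ) (P : List (Sig σ)) : Set ℕ :=
  {i | i ∈ Set.Icc 1 (totLen Ts) ∧ CtMatch P (wpre (conjAt Ts (CA i)) P.length)}

/-- `rank_c(V, j)`: number of occurrences of `c` in `V[..j]`. -/
def rankQ {α : Type*} [DecidableEq α] (c : α) (V : List α) (j : ℕ) : ℕ := (V.take j).count c

/-- `select_c(V, i)`: 1-based position of the `i`-th occurrence of `c` in `V`. -/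
def selectQ {α : Type*} [DecidableEq α] (c : α) (V : List α) (i : ℕ) : ℕ :=
  ((List.range V.length).findIdx fun k => (V.take (k + 1)).count c == i) + 1

end

section Aux
variable {σ : ℕ}

lemma get1_take_eq {X : List (Sig σ)} {n j : ℕ} (h1 : 1 ≤ j) (hj : j ≤ n) :
    get1 (X.take n) j = get1 X j := by
  unfold get1
  rw [List.getD_eq_getElem?_getD, List.getD_eq_getElem?_getD, List.getElem?_take,
    if_pos (by omega)]

lemma get1_eq_of_take {X Y : List (Sig σ)} {n : ℕ} (h : X.take n = Y.take n)
    {j : ℕ} (h1 : 1 ≤ j) (hj : j ≤ n) : get1 X j = get1 Y j := by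
  rw [← get1_take_eq (X := X) h1 hj, h, get1_take_eq h1 hj]

lemma findGreatest_congr {P Q : ℕ → Prop} [DecidablePred P] [DecidablePred Q]
    (n : ℕ) (h : ∀ k ≤ n, (P k ↔ Q k)) : Nat.findGreatest P n = Nat.findGreatest Q n := by
  induction n with
  | zero => simp [Nat.findGreatest]
  | succ n ih =>
    rw [Nat.findGreatest_succ, Nat.findGreatest_succ]
    by_cases hp : P (n + 1)
    · rw [if_pos hp, if_pos ((h (n + 1) le_rfl).1 hp)]
    · rw [if_neg hp, if_neg (fun hq => hp ((h (n + 1) le_rfl).2 hq)),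
        ih (fun k hk => h k (Nat.le_succ_of_le hk))]

lemma pdEntry_eq_of_take {X Y : List (Sig σ)} {n : ℕ} (h : X.take n = Y.take n)
    {k : ℕ} (h1 : 1 ≤ k) (hk : k ≤ n) : pdEntry X k = pdEntry Y k := by
  have hg : ∀ j, 1 ≤ j → j ≤ k → get1 X j = get1 Y j := fun j hj1 hjk =>
    get1_eq_of_take h hj1 (le_trans hjk hk)
  unfold pdEntry
  rw [hg k h1 le_rfl]
  have h2 : (∀ j, 1 ≤ j → j < k → get1 Y k < get1 X j)
      = (∀ j, 1 ≤ j → j < k → get1 Y k < get1 Y j) := by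
    apply propext; constructor <;> intro hh j hj1 hjk
    · rw [← hg j hj1 hjk.le]; exact hh j hj1 hjk
    · rw [hg j hj1 hjk.le]; exact hh j hj1 hjk
  have h3 : Nat.findGreatest (fun j => 1 ≤ j ∧ get1 X j < get1 Y k) (k - 1)
      = Nat.findGreatest (fun j => 1 ≤ j ∧ get1 Y j < get1 Y k) (k - 1) := by
    apply findGreatest_congr
    intro m hm
    rcases Nat.eq_zero_or_pos m with hm0 | hm1
    · simp [hm0]
    · rw [hg m hm1 (by omega)]
  rw [h2, h3]

lemma pdEntry_ne_infE {X : List (Sig σ)} {k m : ℕ} (hm1 : 1 ≤ m) (hmk : m < k)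
    (hbot : get1 X m = ⊥) : pdEntry X k ≠ infE := by
  unfold pdEntry
  by_cases hb : get1 X k = ⊥
  · rw [if_pos hb]; simp [infE]
  rw [if_neg hb]
  have hnall : ¬ ∀ j, 1 ≤ j → j < k → get1 X k < get1 X j := by
    intro hall
    have := hall m hm1 hmk
    rw [hbot] at this
    exact not_lt_bot this
  rw [if_neg hnall]
  simp [infE]

lemma countP_range_cut (p : ℕ → Bool) {n L : ℕ} (hn : n ≤ L)
    (h : ∀ k, n ≤ k → p k = false) :
    (List.range L).countP p = (List.range n).countP p := by
  induction L with
  | zero => have : n = 0 := by omega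
            rw [this]
  | succ L ih =>
    rcases Nat.lt_or_ge n (L + 1) with hlt | hge
    · rw [List.range_succ, List.countP_append, ih (by omega)]
      simp [h L (by omega)]
    · have : n = L + 1 := by omega
      rw [this]

lemma count_pd (X : List (Sig σ)) :
    (pd X).count infE
      = (List.range X.length).countP (fun k => pdEntry X (k + 1) == infE) := by
  rw [pd, List.count_eq_countP, List.countP_map]
  rfl

lemma countInf_pd_eq {X Y : List (Sig σ)} {n : ℕ} (hn : 1 ≤ n)
    (hX : n ≤ X.length) (hY : n ≤ Y.length) (htake : X.take n = Y.take n)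
    (hbot : get1 X n = ⊥) : (pd X).count infE = (pd Y).count infE := by
  have hbotY : get1 Y n = ⊥ := by rw [← get1_eq_of_take htake hn le_rfl]; exact hbot
  have cutX : ∀ k, n ≤ k → (pdEntry X (k + 1) == infE) = false := fun k hk => by
    simp only [beq_eq_false_iff_ne, ne_eq]
    exact pdEntry_ne_infE hn (by omega) hbot
  have cutY : ∀ k, n ≤ k → (pdEntry Y (k + 1) == infE) = false := fun k hk => by
    simp only [beq_eq_false_iff_ne, ne_eq]
    exact pdEntry_ne_infE hn (by omega) hbotY
  rw [count_pd X, count_pd Y, countP_range_cut _ hX cutX, countP_range_cut _ hY cutY]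
  apply List.countP_congr
  intro k hk
  rw [List.mem_range] at hk
  simp only [beq_iff_eq]
  rw [pdEntry_eq_of_take htake (by omega) (by omega)]

lemma count_pd_drop (Z : List (Sig σ)) (hZ : 1 ≤ Z.length) :
    ((pd Z).drop 1).count infE
      = (List.range (Z.length - 1)).countP (fun k => pdEntry Z (k + 2) == infE) := by
  conv_lhs => rw [pd, show Z.length = (Z.length - 1) + 1 by omega, List.range_succ_eq_map]
  rw [List.map_cons, List.drop_one, List.tail_cons, List.map_map, List.count_eq_countP,
    List.countP_map]
  rfl

lemma countInf_pd_drop_eq {X Y : List (Sig σ)} {n : ℕ} (hn : 1 ≤ n)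
    (hX : n ≤ X.length) (hY : n ≤ Y.length) (htake : X.take n = Y.take n)
    (hbot : get1 X n = ⊥) :
    ((pd X).drop 1).count infE = ((pd Y).drop 1).count infE := by
  have hbotY : get1 Y n = ⊥ := by rw [← get1_eq_of_take htake hn le_rfl]; exact hbot
  rw [count_pd_drop X (by omega), count_pd_drop Y (by omega)]
  have cutX : ∀ k, n - 1 ≤ k → (pdEntry X (k + 2) == infE) = false := fun k hk => by
    simp only [beq_eq_false_iff_ne, ne_eq]
    exact pdEntry_ne_infE hn (by omega) hbot
  have cutY : ∀ k, n - 1 ≤ k → (pdEntry Y (k + 2) == infE) = false := fun k hk => by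
    simp only [beq_eq_false_iff_ne, ne_eq]
    exact pdEntry_ne_infE hn (by omega) hbotY
  rw [countP_range_cut _ (by omega) cutX, countP_range_cut _ (by omega) cutY]
  apply List.countP_congr
  intro k hk
  rw [List.mem_range] at hk
  simp only [beq_iff_eq]
  rw [pdEntry_eq_of_take htake (by omega) (by omega)]

lemma rotOne_eq_rotate' {α : Type*} (V : List α) : rotOne V = V.rotate' 1 := by
  cases V with
  | nil => rfl
  | cons a l => simp [rotOne, List.rotate']

lemma rot_eq_rotate' {α : Type*} (V : List α) (k : ℕ) : rot V k = V.rotate' k := by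
  induction k with
  | zero => simp [rot, List.rotate']
  | succ k ih =>
    rw [rot, Function.iterate_succ_apply', ← rot, ih, rotOne_eq_rotate',
      List.rotate'_rotate']

lemma rot_eq_drop_append_take {α : Type*} {V : List α} {k : ℕ} (h : k ≤ V.length) :
    rot V k = V.drop k ++ V.take k := by
  rw [rot_eq_rotate', List.rotate'_eq_drop_append_take h]

lemma rot_length {α : Type*} (V : List α) (k : ℕ) : (rot V k).length = V.length := by
  rw [rot_eq_rotate', List.length_rotate']

end Aux

section Core
variable {σ : ℕ}

lemma rtsEntry_seg (V : List (Sig σ)) (hmem : (⊥ : Sig σ) ∈ V) (i t : ℕ)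
    (hi1 : 1 ≤ i) (ht : i + t ≤ V.idxOf (⊥ : Sig σ) + 1) :
    rtsEntry V (i + t)
      = rtsEntry ((V.take (V.idxOf (⊥ : Sig σ) + 1)).drop (i - 1)) (t + 1) := by
  set p := V.idxOf (⊥ : Sig σ) with hp
  have hpl : p < V.length := List.idxOf_lt_length_iff.mpr hmem
  have hVp : V[p] = ⊥ := List.getElem_idxOf hpl
  set W := (V.take (p + 1)).drop (i - 1) with hWdef
  have hWlen : W.length = p + 2 - i := by simp [hWdef]; omega
  rcases Nat.lt_or_ge (i + t) (p + 1) with hlt | hge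
  · -- i + t ≤ p : both entries non-bot
    set q := i + t - 1 with hq
    have hqp : q < p := by omega
    have hqV : q < V.length := by omega
    have hne : V[q] ≠ ⊥ := by
      have := List.not_of_lt_findIdx (p := fun x => x == (⊥ : Sig σ)) (xs := V)
        (i := q) (show q < V.idxOf (⊥ : Sig σ) from by omega)
      simpa using this
    have e1 : get1 V (i + t) = V[q] := by
      unfold get1
      rw [List.getD_eq_getElem?_getD, List.getElem?_eq_getElem (by omega : i + t - 1 < V.length)]
      rfl
    have htW : t < W.length := by omega
    have e2 : get1 W (t + 1) = V[q] := by
      unfold get1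
      rw [show t + 1 - 1 = t from by omega, List.getD_eq_getElem?_getD,
        List.getElem?_eq_getElem htW]
      simp only [hWdef, List.getElem_drop, List.getElem_take]
      simp only [show i - 1 + t = q from by omega]
      rfl
    set m := p + 1 - (i + t) with hm
    have hm1 : 1 ≤ m := by omega
    have hrV : rot V (i + t) = V.drop (i + t) ++ V.take (i + t) :=
      rot_eq_drop_append_take (by omega)
    have hrW : rot W (t + 1) = W.drop (t + 1) ++ W.take (t + 1) :=
      rot_eq_drop_append_take (by omega)
    have hdropWeq : W.drop (t + 1) = (V.drop (i + t)).take m := by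
      rw [hWdef, List.drop_drop, show i - 1 + (t + 1) = i + t from by omega, List.drop_take]
    have htakeEq : (rot V (i + t)).take m = (rot W (t + 1)).take m := by
      rw [hrV, hrW, List.take_append_of_le_length (by rw [List.length_drop]; omega),
        List.take_append_of_le_length (by rw [List.length_drop]; omega),
        hdropWeq, List.take_take]
      simp
    have hbot1 : get1 (rot V (i + t)) m = ⊥ := by
      unfold get1
      have hml : m - 1 < (rot V (i + t)).length := by rw [rot_length]; omega
      rw [List.getD_eq_getElem?_getD, List.getElem?_eq_getElem hml]
      have hx : (rot V (i + t))[m - 1]'hml = ⊥ := by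
        simp only [hrV]
        rw [List.getElem_append_left (by rw [List.length_drop]; omega), List.getElem_drop]
        simp only [show i + t + (m - 1) = p from by omega]
        exact hVp
      rw [hx]
      rfl
    have hcount1 : (pd (rot V (i + t))).count infE = (pd (rot W (t + 1))).count infE :=
      countInf_pd_eq hm1 (by rw [rot_length]; omega)
        (by rw [rot_length]; omega) htakeEq hbot1
    have hcount2 : ((pd (V[q] :: rot V (i + t))).drop 1).count infE
        = ((pd (V[q] :: rot W (t + 1))).drop 1).count infE := by
      apply countInf_pd_drop_eq (n := m + 1) (by omega)
      · simp only [List.length_cons, rot_length]; omega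
      · simp only [List.length_cons, rot_length]; omega
      · rw [List.take_succ_cons, List.take_succ_cons, htakeEq]
      · unfold get1
        rw [show m + 1 - 1 = m from by omega, show m = (m - 1) + 1 from by omega,
          List.getD_cons_succ]
        exact hbot1
    unfold rtsEntry
    rw [if_neg (by rw [e1]; exact hne), if_neg (by rw [e2]; exact hne), e1, e2,
      hcount1, hcount2]
  · -- i + t = p + 1 : both entries are ⊥
    have hit : i + t = p + 1 := by omega
    have e1 : get1 V (i + t) = ⊥ := by
      unfold get1
      rw [List.getD_eq_getElem?_getD, show i + t - 1 = p from by omega,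
        List.getElem?_eq_getElem hpl, hVp]
      rfl
    have htW : t < W.length := by omega
    have e2 : get1 W (t + 1) = ⊥ := by
      unfold get1
      rw [show t + 1 - 1 = t from by omega, List.getD_eq_getElem?_getD,
        List.getElem?_eq_getElem htW]
      have hx : W[t]'htW = ⊥ := by
        simp only [hWdef, List.getElem_drop, List.getElem_take]
        simp only [show i - 1 + t = p from by omega]
        exact hVp
      rw [hx]
      rfl
    unfold rtsEntry
    rw [if_pos e1, if_pos e2]

end Core


/-- Let `V` be a nonempty string over `Σ_$` containing `$`, and
let `s` be the (1-based) position of the first `$` in `V`. Then for every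
`i ∈ [1..s]`, `rtsenc(V)[i..s] = rtsenc(V[i..s])`. -/
theorem rtsenc_prefix_segment (σ : ℕ) (V : List (Sig σ)) (hV : V ≠ [])
    (hmem : (⊥ : Sig σ) ∈ V) (s : ℕ) (hs : s = V.idxOf (⊥ : Sig σ) + 1) :
    ∀ i ∈ Set.Icc 1 s,
      ((rtsenc V).take s).drop (i - 1) = rtsenc ((V.take s).drop (i - 1)) := by
  subst hs
  intro i hi
  obtain ⟨hi1, his⟩ := hi
  have hpl : V.idxOf (⊥ : Sig σ) < V.length := List.idxOf_lt_length_iff.mpr hmem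
  apply List.ext_getElem
  · simp [rtsenc]
  · intro t h1 h2
    simp only [List.getElem_drop, List.getElem_take, rtsenc, List.getElem_map,
      List.getElem_range]
    rw [show i - 1 + t + 1 = i + t from by omega]
    have hlen : t < V.idxOf (⊥ : Sig σ) + 1 - (i - 1) := by
      simp [rtsenc] at h1
      omega
    exact rtsEntry_seg V hmem i t hi1 (by omega)
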